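/- Let e, k, j, n be positive integers with j ≥ 2, j < k, 2k > e, j + k ≤ e - 1, and n chosen so that (n-1)/n ≤ (k-j)/(e-2) < n/(n+1). Then S_k^e(j) is symmetric if and only if n(k-j) = (n-1)(e-2). -/

import Mathlib

/-- The set of gaps of a numerical semigroup (submonoid of ℕ). -/
def gapsOf (S : AddSubmonoid ℕ) : Set ℕ := {n | n ∉ S}

/-- The Frobenius number: the largest gap. -/
noncomputable def frobeniusNumber (S : AddSubmonoid ℕ) : ℕ := sSup (gapsOf S)

/-- The genus: the number of gaps. -/
noncomputable def genusOf (S : AddSubmonoid ℕ) : ℕ := Nat.card (gapsOf S)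

/-- A numerical semigroup is symmetric iff 2g = F + 1. -/
def IsSymmetricNS (S : AddSubmonoid ℕ) : Prop :=
  2 * genusOf S = frobeniusNumber S + 1

/-- The Sally type semigroup `S_k^e(j) = ⟨e,…,e+j-1, e+j+k,…,2e-1⟩`. -/
def sally (e k j : ℕ) : AddSubmonoid ℕ :=
  AddSubmonoid.closure (Set.Ico e (e + j) ∪ Set.Ico (e + j + k) (2 * e))

/-- characterizing predicate -/
def sallyQ (e k j x : ℕ) : Prop :=
  x = 0 ∨ ∃ m r, 1 ≤ m ∧ r < e ∧ x = m*e + r ∧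
    (r ≤ m*(j-1) ∨ e ≤ r + ((m+1)/2) * (e-(j+k)))

lemma sally_left (hj : 1 ≤ j) : ∀ m r, r ≤ m * (j-1) → m*e + r ∈ sally e k j := by
  intro m
  induction m with
  | zero => intro r hr; simp at hr; simp [hr]
  | succ m ih =>
    intro r hr
    have hgen : e + min r (j-1) ∈ sally e k j := by
      apply AddSubmonoid.subset_closure
      left; simp [Set.mem_Ico]; omega
    have hrest : m*e + (r - min r (j-1)) ∈ sally e k j := by
      apply ih
      rcases le_or_gt r (j-1) with h | h
      · simp [min_eq_left h]
      · have h2 : min r (j-1) = j - 1 := min_eq_right h.le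
        rw [h2]
        have : (m+1)*(j-1) = m*(j-1)+(j-1) := by ring
        omega
    have : (m+1)*e + r = (e + min r (j-1)) + (m*e + (r - min r (j-1))) := by
      have : min r (j-1) ≤ r := min_le_left _ _
      ring_nf; omega
    rw [this]
    exact (sally e k j).add_mem hgen hrest

lemma sally_right (hjke : j + k < e) :
    ∀ t s, t ≤ s → s ≤ t * (e - (j+k)) → ∃ y ∈ sally e k j, y + s = 2*t*e := by
  intro t
  induction t with
  | zero => intro s h1 h2; simp at h2; exact ⟨0, (sally e k j).zero_mem, by omega⟩
  | succ t ih =>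
    intro s h1 h2
    have hd1 : 1 ≤ e - (j+k) := by omega
    have hsucc : (t+1)*(e-(j+k)) = t*(e-(j+k)) + (e-(j+k)) := by ring
    have htd : t ≤ t * (e-(j+k)) := Nat.le_mul_of_pos_right t (by omega)
    obtain ⟨y, hy, hye⟩ := ih (s - min (e-(j+k)) (s - t)) (by omega) (by
      rcases le_or_gt (e-(j+k)) (s - t) with h | h
      · have h' : min (e-(j+k)) (s - t) = e-(j+k) := min_eq_left h
        omega
      · have h' : min (e-(j+k)) (s - t) = s - t := min_eq_right h.le
        omega)
    have hte : 2*(t+1)*e = 2*t*e + 2*e := by ring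
    refine ⟨y + (2*e - min (e-(j+k)) (s - t)), (sally e k j).add_mem hy ?_, by omega⟩
    apply AddSubmonoid.subset_closure
    right; simp [Set.mem_Ico]; omega

lemma sally_mul (e k j m : ℕ) (hj : 1 ≤ j) : m*e ∈ sally e k j := by
  have := sally_left (e := e) (k := k) hj m 0 (by omega)
  simpa using this

lemma sallyQ_add (hj : 2 ≤ j) (hjk : j < k) (h2k : e < 2*k) (he : j + k + 1 ≤ e)
    {x y : ℕ} (hx : sallyQ e k j x) (hy : sallyQ e k j y) : sallyQ e k j (x + y) := by
  rcases hx with rfl | ⟨m1, r1, hm1, hr1e, hx1, hx⟩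
  · simpa using hy
  rcases hy with rfl | ⟨m2, r2, hm2, hr2e, hy1, hy⟩
  · refine Or.inr ⟨m1, r1, hm1, hr1e, ?_, hx⟩
    omega
  right
  -- generalize the products' building blocks
  obtain ⟨D, hD⟩ : ∃ D, e - (j+k) = D := ⟨_, rfl⟩
  obtain ⟨A, hA⟩ : ∃ A, j - 1 = A := ⟨_, rfl⟩
  rw [hD, hA] at hx hy ⊢
  by_cases hc : r1 + r2 < e
  · refine ⟨m1 + m2, r1 + r2, by omega, hc, ?_, ?_⟩
    · have : (m1+m2)*e = m1*e + m2*e := by ring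
      omega
    rcases hx with h1 | h1 <;> rcases hy with h2 | h2
    · left
      have e1 : (m1+m2)*A = m1*A + m2*A := by ring
      omega
    · right
      have ht2 : (m2+1)/2 ≤ (m1+m2+1)/2 := by omega
      have : (m2+1)/2 * D ≤ (m1+m2+1)/2 * D := Nat.mul_le_mul_right _ ht2
      omega
    · right
      have ht1 : (m1+1)/2 ≤ (m1+m2+1)/2 := by omega
      have : (m1+1)/2 * D ≤ (m1+m2+1)/2 * D := Nat.mul_le_mul_right _ ht1
      omega
    · right
      have ht : (m1+1)/2 + (m2+1)/2 ≤ (m1+m2+1)/2 + 1 := by omega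
      have h3 : ((m1+1)/2 + (m2+1)/2) * D ≤ ((m1+m2+1)/2 + 1) * D :=
        Nat.mul_le_mul_right _ ht
      have e1 : ((m1+1)/2 + (m2+1)/2) * D = (m1+1)/2*D + (m2+1)/2*D := by ring
      have e2 : ((m1+m2+1)/2 + 1) * D = (m1+m2+1)/2*D + D := by ring
      omega
  · refine ⟨m1 + m2 + 1, r1 + r2 - e, by omega, by omega, ?_, ?_⟩
    · have : (m1+m2+1)*e = m1*e + m2*e + e := by ring
      omega
    rcases hx with h1 | h1 <;> rcases hy with h2 | h2
    · left
      have e1 : m1*A + m2*A = (m1+m2)*A := by ring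
      have e2 : (m1+m2)*A ≤ (m1+m2+1)*A := Nat.mul_le_mul_right _ (by omega)
      omega
    · left
      have e2 : m1*A ≤ (m1+m2+1)*A := Nat.mul_le_mul_right _ (by omega)
      omega
    · left
      have e2 : m2*A ≤ (m1+m2+1)*A := Nat.mul_le_mul_right _ (by omega)
      omega
    · right
      have ht : (m1+1)/2 + (m2+1)/2 ≤ (m1+m2+1+1)/2 := by omega
      have h3 : ((m1+1)/2 + (m2+1)/2) * D ≤ (m1+m2+1+1)/2 * D := Nat.mul_le_mul_right _ ht
      have e1 : ((m1+1)/2 + (m2+1)/2) * D = (m1+1)/2*D + (m2+1)/2*D := by ring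
      omega

lemma mem_sally_iff (hj : 2 ≤ j) (hjk : j < k) (h2k : e < 2*k) (he : j + k + 1 ≤ e)
    {x : ℕ} : x ∈ sally e k j ↔ sallyQ e k j x := by
  constructor
  · intro hx
    have hle : sally e k j ≤
        { carrier := {x | sallyQ e k j x},
          zero_mem' := Or.inl rfl,
          add_mem' := fun ha hb => sallyQ_add hj hjk h2k he ha hb } := by
      apply AddSubmonoid.closure_le.mpr
      rintro g (hg | hg) <;> simp only [Set.mem_Ico] at hg
      · refine Or.inr ⟨1, g - e, le_refl 1, by omega, by omega, Or.inl ?_⟩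
        omega
      · refine Or.inr ⟨1, g - e, le_refl 1, by omega, by omega, Or.inr ?_⟩
        omega
    exact hle hx
  · rintro (rfl | ⟨m, r, hm, hre, rfl, hx⟩)
    · exact (sally e k j).zero_mem
    rcases hx with h1 | h1
    · exact sally_left (by omega) m r h1
    · have hd1 : 1 ≤ e - (j+k) := by omega
      obtain ⟨D, hD⟩ : ∃ D, e - (j+k) = D := ⟨_, rfl⟩
      rw [hD] at h1 hd1
      have hDpos : 0 < D := by omega
      -- t' = ceil((e-r) / D)
      have hquot0 := Nat.div_add_mod ((e - r) + D - 1) D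
      have hq0 : ((e - r) + D - 1) % D < D := Nat.mod_lt _ hDpos
      obtain ⟨t', ht'⟩ : ∃ t', ((e - r) + D - 1) / D = t' := ⟨_, rfl⟩
      obtain ⟨q, hqe⟩ : ∃ q, ((e - r) + D - 1) % D = q := ⟨_, rfl⟩
      rw [ht', hqe] at hquot0
      rw [hqe] at hq0
      have hcomm : D * t' = t' * D := Nat.mul_comm _ _
      have hquot : (e - r) + D - 1 = t' * D + q := by omega
      have hq : q < D := hq0
      clear hquot0 hq0 hcomm ht' hqe
      have hsD : e - r ≤ (m+1)/2 * D := by omega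
      have htD : e - r ≤ t' * D := by omega
      have ht's : t' ≤ e - r := by
        rcases Nat.lt_or_ge t' (e - r + 1) with h | h
        · omega
        · exfalso
          have : (e - r + 1) * D ≤ t' * D := Nat.mul_le_mul_right _ h
          have e1 : (e - r + 1) * D = (e-r)*D + D := by ring
          have e2 : e - r ≤ (e-r) * D := Nat.le_mul_of_pos_right _ (by omega)
          omega
      have ht't : t' ≤ (m+1)/2 := by
        rcases Nat.lt_or_ge t' ((m+1)/2 + 1) with h | h
        · omega
        · exfalso
          have h3 : ((m+1)/2 + 1) * D ≤ t' * D := Nat.mul_le_mul_right _ h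
          have e1 : ((m+1)/2 + 1) * D = (m+1)/2*D + D := by ring
          omega
      have h2t : 2*t' ≤ m + 1 := by omega
      obtain ⟨y, hy, hye⟩ := sally_right (e := e) (k := k) (j := j) (by omega) t' (e - r)
        ht's (by rw [hD]; omega)
      have hxeq : m*e + r = (m + 1 - 2*t') * e + y := by
        have e1 : (m + 1 - 2*t') * e + 2*t'*e = (m+1)*e := by
          rw [← Nat.add_mul]; congr 1; omega
        have e2 : (m+1)*e = m*e + e := by ring
        omega
      rw [hxeq]
      exact (sally e k j).add_mem (sally_mul e k j _ (by omega)) hy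

/-- The finset of gaps -/
def sallyGaps (e k j n : ℕ) : Finset ℕ :=
  (Finset.range (2*n+2)).biUnion
    (fun m => Finset.Ico (m*e + m*(j-1) + 1) ((m+1)*e - ((m+1)/2) * (e-(j+k))))

lemma decomp_eq {e x m m' r : ℕ} (h : r < e) (hx : m*e ≤ x) (hx2 : x < m*e + e)
    (hd : x = m'*e + r) : m' = m ∧ r = x - m*e := by
  have h1 : m' < m + 1 := by
    by_contra hcon
    have : (m+1)*e ≤ m'*e := Nat.mul_le_mul_right _ (by omega)
    have e1 : (m+1)*e = m*e + e := by ring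
    omega
  have h2 : m ≤ m' := by
    by_contra hcon
    have : (m'+1)*e ≤ m*e := Nat.mul_le_mul_right _ (by omega)
    have e1 : (m'+1)*e = m'*e + e := by ring
    omega
  have : m' = m := by omega
  subst this
  omega

lemma sally_gaps_eq (hj : 2 ≤ j) (hjk : j < k) (h2k : e < 2*k) (he : j + k + 1 ≤ e)
    (hP2 : e - 2 < (n+1)*(2*(j-1) + (e-(j+k)))) :
    gapsOf (sally e k j) = ↑(sallyGaps e k j n) := by
  ext x
  simp only [gapsOf, Set.mem_setOf_eq, mem_sally_iff hj hjk h2k he, sallyGaps,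
    Finset.coe_biUnion, Finset.mem_range, Finset.coe_Ico, Set.mem_iUnion,
    Set.mem_Ico, exists_prop, Finset.mem_coe, Finset.coe_range, Set.mem_Iio]
  constructor
  · intro hx
    have hx0 : x ≠ 0 := fun h => hx (Or.inl h)
    by_cases hxe : x < e
    · refine ⟨0, by omega, ?_, ?_⟩ <;> simp <;> omega
    push_neg at hxe
    have he0 : 0 < e := by omega
    obtain ⟨m, hm⟩ : ∃ m, x / e = m := ⟨_, rfl⟩
    obtain ⟨r, hr⟩ : ∃ r, x % e = r := ⟨_, rfl⟩
    have hdec : x = m*e + r := by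
      have h2 := Nat.div_add_mod x e; rw [hm, hr] at h2
      have hcomm : e*m = m*e := Nat.mul_comm e m
      omega
    have hre : r < e := by
      have := Nat.mod_lt x he0; omega
    have hm1 : 1 ≤ m := by
      rcases Nat.eq_zero_or_pos m with h | h
      · exfalso; rw [h] at hdec; omega
      · exact h
    have hcond : ¬(r ≤ m*(j-1) ∨ e ≤ r + ((m+1)/2) * (e-(j+k))) :=
      fun h => hx (Or.inr ⟨m, r, hm1, hre, hdec, h⟩)
    push_neg at hcond
    obtain ⟨hL, hR⟩ := hcond
    have hmn : m < 2*n + 2 := by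
      by_contra hcon
      push_neg at hcon
      have ht : n + 1 ≤ (m+1)/2 := by omega
      have k1 : (2*n+2)*(j-1) ≤ m*(j-1) := Nat.mul_le_mul_right _ (by omega)
      have k2 : (n+1)*(e-(j+k)) ≤ (m+1)/2*(e-(j+k)) := Nat.mul_le_mul_right _ ht
      have e1 : (n+1)*(2*(j-1) + (e-(j+k))) = (2*n+2)*(j-1) + (n+1)*(e-(j+k)) := by ring
      omega
    refine ⟨m, hmn, by omega, ?_⟩
    have e1 : (m+1)*e = m*e + e := by ring
    omega
  · rintro ⟨m, hmn, hlo, hhi⟩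
    intro hQ
    have e1 : (m+1)*e = m*e + e := by ring
    have hxlt : x < m*e + e := by omega
    rcases hQ with rfl | ⟨m', r', hm1, hre, hdec, hcond⟩
    · omega
    obtain ⟨hmm, hrr⟩ := decomp_eq hre (by omega) hxlt hdec
    subst hmm
    rcases hcond with h | h
    · omega
    · omega

lemma sallyGaps_card (e k j n : ℕ) (he : 0 < e) :
    (sallyGaps e k j n).card
      = ∑ m ∈ Finset.range (2*n+2),
          (((m+1)*e - ((m+1)/2) * (e-(j+k))) - (m*e + m*(j-1) + 1)) := by
  rw [sallyGaps, Finset.card_biUnion]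
  · exact Finset.sum_congr rfl (fun m _ => Nat.card_Ico _ _)
  · intro a ha b hb hab
    simp only [Function.onFun]
    rw [Finset.disjoint_left]
    intro x hxa hxb
    rw [Finset.mem_Ico] at hxa hxb
    have h1 : a*e < x := by omega
    have h2 : x < (a+1)*e := by omega
    have h3 : b*e < x := by omega
    have h4 : x < (b+1)*e := by omega
    rcases Nat.lt_or_ge a b with h | h
    · have : (a+1)*e ≤ b*e := Nat.mul_le_mul_right _ (by omega)
      omega
    · have hba : b < a := by omega
      have : (b+1)*e ≤ a*e := Nat.mul_le_mul_right _ (by omega)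
      omega

lemma sum_rows (A D : ℕ) : ∀ N e', 2*N*A + N*D ≤ e' →
    (∑ m ∈ Finset.range (2*N+1),
        (((m+1)*(e'+2) - ((m+1)/2) * D) - (m*(e'+2) + m*A + 1)))
      + (N*(2*N+1))*A + (N*(N+1))*D = (2*N+1)*(e'+1) := by
  intro N
  induction N with
  | zero =>
    intro e' h
    simp
  | succ N ih =>
    intro e' h
    have hIH := ih e' (by
      have i1 : 2*(N+1)*A = 2*N*A + 2*A := by ring
      have i2 : (N+1)*D = N*D + D := by ring
      omega)
    have hr : 2*(N+1)+1 = (2*N+1) + 1 + 1 := by ring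
    rw [hr, Finset.sum_range_succ, Finset.sum_range_succ]
    -- simplify the two new terms
    have ht1 : ((2*N+1+1)/2) = N+1 := by omega
    have ht2 : ((2*N+1+1+1)/2) = N+1 := by omega
    rw [ht1, ht2]
    -- de-truncate the two new terms
    have i1 : 2*(N+1)*A = 2*N*A + 2*A := by ring
    have i2 : (N+1)*D = N*D + D := by ring
    have i3 : (2*N+1+1)*(e'+2) = (2*N+1)*(e'+2) + (e'+2) := by ring
    have i4 : (2*N+1+1+1)*(e'+2) = (2*N+1)*(e'+2) + (e'+2) + (e'+2) := by ring
    have i5 : (2*N+1)*A = 2*N*A + A := by ring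
    have i6 : (2*N+1+1)*A = 2*N*A + 2*A := by ring
    have hf1 : ((2*N+1+1)*(e'+2) - (N+1) * D) - ((2*N+1)*(e'+2) + (2*N+1)*A + 1)
        = e' + 1 - (N*D + D) - (2*N*A + A) := by omega
    have hf2 : ((2*N+1+1+1)*(e'+2) - (N+1) * D) - ((2*N+1+1)*(e'+2) + (2*N+1+1)*A + 1)
        = e' + 1 - (N*D + D) - (2*N*A + 2*A) := by omega
    rw [hf1, hf2]
    -- now combine with IH
    have i7 : ((N+1)*(2*N+1+1+1))*A = (N*(2*N+1))*A + 2*(2*N*A) + 3*A := by ring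
    have i8 : ((N+1)*(N+1+1))*D = (N*(N+1))*D + 2*(N*D) + 2*D := by ring
    have i11 : (2*N+1+1+1)*(e'+1) = (2*N+1)*(e'+1) + 2*(e'+1) := by ring
    omega

lemma sally_frob_case1 (hj : 2 ≤ j) (hjk : j < k) (h2k : e < 2*k) (he : j + k + 1 ≤ e)
    (hP1 : n*(2*(j-1)+(e-(j+k))) ≤ e-2)
    (hP2 : e - 2 < (n+1)*(2*(j-1) + (e-(j+k))))
    (hcase : e - 2 < n*(2*(j-1)+(e-(j+k))) + ((j-1) + (e-(j+k)))) :
    frobeniusNumber (sally e k j) = (2*n+1)*e - n*(e-(j+k)) - 1 := by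
  rw [frobeniusNumber, sally_gaps_eq hj hjk h2k he hP2]
  apply IsGreatest.csSup_eq
  have ep : n*(2*(j-1)+(e-(j+k))) = 2*(n*(j-1)) + n*(e-(j+k)) := by ring
  have e1 : (2*n+1)*e = 2*n*e + e := by ring
  have e2 : 2*n*(j-1) = 2*(n*(j-1)) := by ring
  constructor
  · simp only [Finset.mem_coe, sallyGaps, Finset.mem_biUnion, Finset.mem_range,
      Finset.mem_Ico]
    refine ⟨2*n, by omega, ?_, ?_⟩
    · have ht : (2*n+1)/2 = n := by omega
      omega
    · have ht : (2*n+1)/2 = n := by omega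
      rw [ht]
      omega
  · intro x hx
    simp only [Finset.mem_coe, sallyGaps, Finset.mem_biUnion, Finset.mem_range,
      Finset.mem_Ico] at hx
    obtain ⟨m, hm, hlo, hhi⟩ := hx
    obtain ⟨t, htt⟩ : ∃ t, (m+1)/2 = t := ⟨_, rfl⟩
    rw [htt] at hhi
    have hm2n : m ≤ 2*n := by
      by_contra hcon
      have hme : m = 2*n+1 := by omega
      subst hme
      have ht : t = n+1 := by omega
      subst ht
      have iA : (2*n+1)*(j-1) = 2*(n*(j-1)) + (j-1) := by ring
      have iD : (n+1)*(e-(j+k)) = n*(e-(j+k)) + (e-(j+k)) := by ring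
      have i0 : (2*n+1+1)*e = (2*n+1)*e + e := by ring
      omega
    have ht1 : t ≤ n := by omega
    have ht2 : m ≤ n + t := by omega
    have c1 : t*(e-(j+k)) + (n-t)*(e-(j+k)) = n*(e-(j+k)) := by
      rw [← Nat.add_mul]; congr 1; omega
    have c2 : (n-t)*(e-(j+k)) ≤ (n-t)*e := Nat.mul_le_mul_left _ (by omega)
    have c3 : (n-t)*e ≤ (2*n-m)*e := Nat.mul_le_mul_right _ (by omega)
    have c4 : (m+1)*e + (2*n-m)*e = (2*n+1)*e := by
      rw [← Nat.add_mul]; congr 1; omega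
    omega

lemma sally_frob_case2 (hj : 2 ≤ j) (hjk : j < k) (h2k : e < 2*k) (he : j + k + 1 ≤ e)
    (hP1 : n*(2*(j-1)+(e-(j+k))) ≤ e-2)
    (hP2 : e - 2 < (n+1)*(2*(j-1) + (e-(j+k))))
    (hcase : n*(2*(j-1)+(e-(j+k))) + ((j-1) + (e-(j+k))) ≤ e - 2) :
    frobeniusNumber (sally e k j) = (2*n+2)*e - (n+1)*(e-(j+k)) - 1 := by
  rw [frobeniusNumber, sally_gaps_eq hj hjk h2k he hP2]
  apply IsGreatest.csSup_eq
  have ep : n*(2*(j-1)+(e-(j+k))) = 2*(n*(j-1)) + n*(e-(j+k)) := by ring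
  have e1 : (2*n+2)*e = 2*n*e + e + e := by ring
  have e2 : 2*n*(j-1) = 2*(n*(j-1)) := by ring
  have iA : (2*n+1)*(j-1) = 2*(n*(j-1)) + (j-1) := by ring
  have iD : (n+1)*(e-(j+k)) = n*(e-(j+k)) + (e-(j+k)) := by ring
  have i0 : (2*n+1)*e = 2*n*e + e := by ring
  constructor
  · simp only [Finset.mem_coe, sallyGaps, Finset.mem_biUnion, Finset.mem_range,
      Finset.mem_Ico]
    refine ⟨2*n+1, by omega, ?_, ?_⟩
    · omega
    · have ht : (2*n+1+1)/2 = n+1 := by omega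
      rw [ht]
      have i2e : (2*n+1+1)*e = 2*n*e + e + e := by ring
      omega
  · intro x hx
    simp only [Finset.mem_coe, sallyGaps, Finset.mem_biUnion, Finset.mem_range,
      Finset.mem_Ico] at hx
    obtain ⟨m, hm, hlo, hhi⟩ := hx
    obtain ⟨t, htt⟩ : ∃ t, (m+1)/2 = t := ⟨_, rfl⟩
    rw [htt] at hhi
    have hm2n : m ≤ 2*n+1 := by omega
    have ht1 : t ≤ n+1 := by omega
    have ht2 : m ≤ n + t := by omega
    have c1 : t*(e-(j+k)) + (n+1-t)*(e-(j+k)) = (n+1)*(e-(j+k)) := by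
      rw [← Nat.add_mul]; congr 1; omega
    have c2 : (n+1-t)*(e-(j+k)) ≤ (n+1-t)*e := Nat.mul_le_mul_left _ (by omega)
    have c3 : (n+1-t)*e ≤ (2*n+1-m)*e := Nat.mul_le_mul_right _ (by omega)
    have c4 : (m+1)*e + (2*n+1-m)*e = (2*n+2)*e := by
      rw [← Nat.add_mul]; congr 1; omega
    omega

theorem sally_symmetric_iff_even_level (e k j n : ℕ) (hn : 0 < n) (hj : 2 ≤ j)
    (hjk : j < k) (h2k : e < 2 * k) (hjke : j + k ≤ e - 1)
    (h1 : ((n : ℚ) - 1) / n ≤ ((k : ℚ) - j) / ((e : ℚ) - 2))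
    (h2 : ((k : ℚ) - j) / ((e : ℚ) - 2) < (n : ℚ) / (n + 1)) :
    IsSymmetricNS (sally e k j) ↔ n * (k - j) = (n - 1) * (e - 2) := by
  have he : j + k + 1 ≤ e := by omega
  have he6 : 6 ≤ e := by omega
  -- convert the rational hypotheses
  have hdenn : (0:ℚ) < (n:ℚ) := by exact_mod_cast hn
  have hden : (0:ℚ) < (e:ℚ) - 2 := by
    have : (6:ℚ) ≤ (e:ℚ) := by exact_mod_cast he6
    linarith
  rw [div_le_div_iff₀ hdenn hden] at h1
  rw [div_lt_div_iff₀ hden (by linarith : (0:ℚ) < (n:ℚ)+1)] at h2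
  have hc1 : (n-1)*(e-2) ≤ (k-j)*n := by
    have h' : (((n-1) * (e-2) : ℕ) : ℚ) ≤ (((k-j)*n : ℕ) : ℚ) := by
      push_cast [Nat.cast_sub (by omega : 1 ≤ n), Nat.cast_sub (by omega : 2 ≤ e),
        Nat.cast_sub (by omega : j ≤ k)]
      linarith
    exact_mod_cast h'
  have hc2 : (k-j)*(n+1) < n*(e-2) := by
    have h' : (((k-j)*(n+1) : ℕ) : ℚ) < ((n*(e-2) : ℕ) : ℚ) := by
      push_cast [Nat.cast_sub (by omega : 2 ≤ e), Nat.cast_sub (by omega : j ≤ k)]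
      linarith
    exact_mod_cast h'
  -- nat versions
  have hPsum : (k-j) + (2*(j-1)+(e-(j+k))) = e - 2 := by omega
  have a1 : n*(e-2) = n*(k-j) + n*(2*(j-1)+(e-(j+k))) := by
    rw [← hPsum]; ring
  have hn1 : n - 1 + 1 = n := by omega
  have a2 : (n-1)*(e-2) + (e-2) = n*(e-2) := by
    have h' : (n-1+1)*(e-2) = (n-1)*(e-2) + (e-2) := by ring
    rw [hn1] at h'
    omega
  have a3 : (k-j)*n = n*(k-j) := by ring
  have a4 : (k-j)*(n+1) = n*(k-j) + (k-j) := by ring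
  have a5 : (n+1)*(2*(j-1)+(e-(j+k))) = n*(2*(j-1)+(e-(j+k))) + (2*(j-1)+(e-(j+k))) := by
    ring
  have hP1 : n*(2*(j-1)+(e-(j+k))) ≤ e-2 := by omega
  have hP2 : e - 2 < (n+1)*(2*(j-1) + (e-(j+k))) := by omega
  -- the right-hand side is equivalent to e-2 = n*P
  have hRHS : (n * (k - j) = (n - 1) * (e - 2)) ↔ e - 2 = n*(2*(j-1)+(e-(j+k))) := by
    omega
  rw [hRHS]
  -- genus
  have hg : genusOf (sally e k j)
      = ∑ m ∈ Finset.range (2*n+2),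
          (((m+1)*e - ((m+1)/2) * (e-(j+k))) - (m*e + m*(j-1) + 1)) := by
    rw [genusOf, sally_gaps_eq hj hjk h2k he hP2]
    simp only [Finset.coe_sort_coe, Nat.card_eq_finsetCard]
    rw [sallyGaps_card e k j n (by omega)]
  rw [show 2*n+2 = (2*n+1)+1 from rfl, Finset.sum_range_succ] at hg
  have ht : (2*n+1+1)/2 = n+1 := by omega
  rw [ht] at hg
  -- substitute e = e' + 2
  obtain ⟨e', rfl⟩ : ∃ e', e = e' + 2 := ⟨e - 2, by omega⟩
  have hsum := sum_rows (j-1) (e'+2-(j+k)) n e' (by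
    have r4 : n*(2*(j-1)+(e'+2-(j+k))) = 2*(n*(j-1)) + n*(e'+2-(j+k)) := by ring
    have r4b : 2*n*(j-1) = 2*(n*(j-1)) := by ring
    omega)
  -- abbreviate rho
  obtain ⟨ρ, hρ⟩ : ∃ ρ, e' = n*(2*(j-1)+(e'+2-(j+k))) + ρ :=
    ⟨e' - n*(2*(j-1)+(e'+2-(j+k))), by omega⟩
  unfold IsSymmetricNS
  rw [hg]
  -- ring identities
  have R1 : (2*n+1)*(e'+2) = (2*n+1)*(e'+1) + (2*n+1) := by ring
  have R2 : (2*n+1+1)*(e'+2) = (2*n+1)*(e'+2) + (e'+2) := by ring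
  have R3 : (n+1)*(e'+2-(j+k)) = n*(e'+2-(j+k)) + (e'+2-(j+k)) := by ring
  have R4 : n*(2*(j-1)+(e'+2-(j+k))) = 2*(n*(j-1)) + n*(e'+2-(j+k)) := by ring
  have R5 : (2*n+1)*(j-1) = 2*(n*(j-1)) + (j-1) := by ring
  have R6 : (n*(2*n+1))*(j-1) = 2*(n*(n*(j-1))) + n*(j-1) := by ring
  have R7 : (n*(n+1))*(e'+2-(j+k)) = n*(n*(e'+2-(j+k))) + n*(e'+2-(j+k)) := by ring
  have R9 : (2*n+1)*(e'+1) = 2*(n*e') + e' + 2*n + 1 := by ring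
  have R10 : n * e' = 2*(n*(n*(j-1))) + n*(n*(e'+2-(j+k))) + n*ρ := by
    conv_lhs => rw [hρ]
    ring
  by_cases hcase : e' < n*(2*(j-1)+(e'+2-(j+k))) + ((j-1) + (e'+2-(j+k)))
  · -- row 2n+1 is empty; F = (2n+1)e - nD - 1
    rw [sally_frob_case1 hj hjk h2k he hP1 hP2 (by omega)]
    have hL : ((2*n+1+1)*(e'+2) - (n+1) * (e'+2-(j+k)))
        - ((2*n+1)*(e'+2) + (2*n+1)*(j-1) + 1) = 0 := by omega
    rw [hL]
    constructor
    · intro hs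
      have hrho : ρ = 0 ∧ n * ρ = 0 := by omega
      omega
    · intro hs
      have hrho : ρ = 0 := by omega
      subst hrho
      simp only [Nat.mul_zero] at R10
      omega
  · -- row 2n+1 is nonempty; F = (2n+2)e - (n+1)D - 1
    rw [sally_frob_case2 hj hjk h2k he hP1 hP2 (by omega)]
    -- both sides are false
    constructor
    · intro hs
      exfalso
      -- 2g - (F+1) = (n+1)(2ρ - P) > 0
      have R11 : (2*n+2)*(e'+2) = (2*n+1)*(e'+2) + (e'+2) := by ring
      -- need n*ρ ≥ n*((j-1)+(e'+2-(j+k)))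
      have hge : ρ ≥ (j-1) + (e'+2-(j+k)) := by omega
      have hmul : n*((j-1) + (e'+2-(j+k))) ≤ n*ρ := Nat.mul_le_mul_left _ hge
      have R12 : n*((j-1) + (e'+2-(j+k))) = n*(j-1) + n*(e'+2-(j+k)) := by ring
      omega
    · intro hs
      exfalso
      omega
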